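/- With the eigenvalue perturbation identity above, if additionally ‖Ĉ‖ ≤ M and |λ̂_j| ≤ M, then |λ̂_j − λ_j − ⟨(Ĉ−C)φ_j, φ_j⟩| ≤ 2M ‖(P̂_j − P_j)φ_j‖² ≤ 2M ‖φ̂_j − φ_j‖². -/

import Mathlib

open RealInnerProductSpace

/-- Quadratic remainder bound for the eigenvalue perturbation: if ‖Ĉ‖ ≤ M and |λ̂_j| ≤ M,
then |λ̂_j − λ_j − ⟨(Ĉ−C)φ_j, φ_j⟩| ≤ 2M‖(P̂_j−P_j)φ_j‖² ≤ 2M‖φ̂_j−φ_j‖². -/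
theorem eigenvalue_perturbation_remainder_bound
    {H : Type*} [NormedAddCommGroup H] [InnerProductSpace ℝ H] [CompleteSpace H]
    (C Chat : H →L[ℝ] H)
    (hC : IsSelfAdjoint C) (hCcp : IsCompactOperator C)
    (hChat : IsSelfAdjoint Chat) (hChatcp : IsCompactOperator Chat)
    (lam lamhat M : ℝ) (phi phihat : H)
    (hphi : ‖phi‖ = 1) (hphihat : ‖phihat‖ = 1)
    (heig : C phi = lam • phi)
    (heighat : Chat phihat = lamhat • phihat)
    (hlam : ⟪C phi, phi⟫ = lam)
    (hsign : ⟪phihat, phi⟫ ≥ 0)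
    (hM1 : ‖Chat‖ ≤ M) (hM2 : |lamhat| ≤ M) :
    |lamhat - lam - ⟪Chat phi - C phi, phi⟫|
        ≤ 2 * M * ‖(⟪phihat, phi⟫ • phihat - ⟪phi, phi⟫ • phi : H)‖ ^ 2 ∧
    2 * M * ‖(⟪phihat, phi⟫ • phihat - ⟪phi, phi⟫ • phi : H)‖ ^ 2
        ≤ 2 * M * ‖phihat - phi‖ ^ 2 := by
  set a : ℝ := ⟪phihat, phi⟫ with ha
  have hpp : ⟪phi, phi⟫ = (1:ℝ) := by
    rw [real_inner_self_eq_norm_sq, hphi]; norm_num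
  have hhh : ⟪phihat, phihat⟫ = (1:ℝ) := by
    rw [real_inner_self_eq_norm_sq, hphihat]; norm_num
  have hsym : ⟪phi, phihat⟫ = a := (real_inner_comm phi phihat).symm
  set w : H := phi - a • phihat with hw
  have hwh : ⟪w, phihat⟫ = 0 := by
    simp [hw, inner_sub_left, real_inner_smul_left, hhh, hsym, hphihat]
  have hhw : ⟪phihat, w⟫ = 0 := by rw [real_inner_comm]; exact hwh
  have hM0 : 0 ≤ M := le_trans (abs_nonneg _) hM2
  -- norm of v = ‖w‖
  have hvw : (a • phihat - ⟪phi, phi⟫ • phi : H) = -w := by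
    rw [hpp, one_smul, hw]; abel
  have hwsq : ‖w‖ ^ 2 = 1 - a ^ 2 := by
    rw [hw, norm_sub_sq_real, real_inner_smul_right, norm_smul, hphi, hphihat, hsym]
    have : |a| = a := abs_of_nonneg hsign
    simp [Real.norm_eq_abs, this]
    ring
  have hwnn : 0 ≤ 1 - a ^ 2 := hwsq ▸ sq_nonneg ‖w‖
  -- self-adjointness
  have hadj : ⟪Chat w, phihat⟫ = 0 := by
    have := hChat.adjoint_eq
    calc ⟪Chat w, phihat⟫ = ⟪w, Chat phihat⟫ := by
          conv_lhs => rw [← this]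
          exact ContinuousLinearMap.adjoint_inner_left _ _ _
      _ = 0 := by rw [heighat, real_inner_smul_right, hwh, mul_zero]
  -- key expansion
  have hphieq : phi = a • phihat + w := by rw [hw]; abel
  have hexp : ⟪Chat phi, phi⟫ = lamhat * a ^ 2 + ⟪Chat w, w⟫ := by
    conv_lhs => rw [hphieq]
    simp only [map_add, map_smul, heighat, inner_add_left, inner_add_right,
      real_inner_smul_left, real_inner_smul_right, hhh, hhw, hadj, hwh]
    ring
  have hlhs : lamhat - lam - ⟪Chat phi - C phi, phi⟫
      = lamhat * (1 - a ^ 2) - ⟪Chat w, w⟫ := by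
    rw [inner_sub_left, hlam, hexp]; ring
  have hCw : |⟪Chat w, w⟫| ≤ M * (1 - a ^ 2) := by
    calc |⟪Chat w, w⟫| ≤ ‖Chat w‖ * ‖w‖ := abs_real_inner_le_norm _ _
      _ ≤ (‖Chat‖ * ‖w‖) * ‖w‖ := by
          gcongr; exact Chat.le_opNorm w
      _ = ‖Chat‖ * ‖w‖ ^ 2 := by ring
      _ ≤ M * (1 - a ^ 2) := by rw [hwsq]; gcongr
  have hnormv : ‖(⟪phihat, phi⟫ • phihat - ⟪phi, phi⟫ • phi : H)‖ ^ 2 = 1 - a ^ 2 := by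
    rw [← ha, hvw, norm_neg, hwsq]
  constructor
  · rw [hlhs, hnormv]
    have h1 : |lamhat * (1 - a ^ 2)| ≤ M * (1 - a ^ 2) := by
      rw [abs_mul, abs_of_nonneg hwnn]; gcongr
    calc |lamhat * (1 - a ^ 2) - ⟪Chat w, w⟫|
        ≤ |lamhat * (1 - a ^ 2)| + |⟪Chat w, w⟫| := abs_sub _ _
      _ ≤ M * (1 - a ^ 2) + M * (1 - a ^ 2) := add_le_add h1 hCw
      _ = 2 * M * (1 - a ^ 2) := by ring
  · rw [hnormv, norm_sub_sq_real, hphi, hphihat, ← ha]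
    nlinarith [sq_nonneg (1 - a)]
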